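/- Let p ≥ 1, let v satisfy hypothesis (H), let μ₀ ∈ M, and fix T > 0. For each k ∈ ℕ let μ^k ∈ C([0,T], M) be the output of the semi-discrete Lagrangian Scheme 1 with time step Δt = T/2^k. Then {μ^k}_{k∈ℕ} is a Cauchy sequence in C([0,T], M) with respect to the distance d(μ,ν) = sup_{t∈[0,T]} W_p(μ_t, ν_t). -/

import Mathlib

open MeasureTheory Set
open scoped RealInnerProductSpace

noncomputable section

abbrev En (n : ℕ) : Type := EuclideanSpace ℝ (Fin n)

/-- `𝓜`: probability measures on ℝⁿ with compact support, absolutely continuous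
with respect to Lebesgue measure. -/
def MemM (n : ℕ) (μ : Measure (En n)) : Prop :=
  IsProbabilityMeasure μ ∧ μ ≪ (volume : Measure (En n)) ∧
    ∃ K : Set (En n), IsCompact K ∧ μ Kᶜ = 0

/-- A finite positive measure on ℝⁿ, absolutely continuous with respect to Lebesgue
measure and compactly supported. -/
def NiceMeasure (n : ℕ) (μ : Measure (En n)) : Prop :=
  IsFiniteMeasure μ ∧ μ ≪ (volume : Measure (En n)) ∧
    ∃ K : Set (En n), IsCompact K ∧ μ Kᶜ = 0

/-- Wasserstein distance of exponent `p`, in the Monge (transport-map) formulation: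
`W_p(μ,ν) = inf { (∫ ‖γ x - x‖^p dμ)^(1/p) : γ measurable, γ#μ = ν }`. -/
def Wp (n : ℕ) (p : ℝ) (μ ν : Measure (En n)) : ℝ :=
  sInf { c : ℝ | ∃ γ : En n → En n, Measurable γ ∧ Measure.map γ μ = ν ∧
    c = (∫ x, ‖γ x - x‖ ^ p ∂μ) ^ (1 / p) }

/-- `Φ` is the flow of the vector field `v`: `Φ 0 x = x` and `∂ₜ Φ t x = v (Φ t x)`. -/
def IsFlow (n : ℕ) (v : En n → En n) (Φ : ℝ → En n → En n) : Prop :=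
  (∀ x, Φ 0 x = x) ∧ ∀ x t, HasDerivAt (fun s => Φ s x) (v (Φ t x)) t

/-- Hypothesis (H): `v[μ]` is `C¹`, uniformly Lipschitz (constant `L`), uniformly
bounded (constant `M`), and `μ ↦ v[μ]` is Lipschitz from `(𝓜, W_p)` to `C⁰` with
constant `K`. -/
def HypH (n : ℕ) (p : ℝ) (v : Measure (En n) → En n → En n) (L M K : ℝ) : Prop :=
  0 < L ∧ 0 < M ∧ 0 < K ∧
  (∀ μ, MemM n μ → ContDiff ℝ 1 (v μ)) ∧
  (∀ μ, MemM n μ → ∀ x y, ‖v μ x - v μ y‖ ≤ L * ‖x - y‖) ∧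
  (∀ μ, MemM n μ → ∀ x, ‖v μ x‖ ≤ M) ∧
  (∀ μ ν, MemM n μ → MemM n ν → ∀ x, ‖v μ x - v ν x‖ ≤ K * Wp n p μ ν)

/-- Scheme 1 (semi-discrete in time Lagrangian scheme) with time step `Δt` on `[0,T]`:
`μ 0 = μ₀` and, on each interval `[iΔt, (i+1)Δt]`, `μ t` is the push-forward of
`μ (iΔt)` by the flow of the frozen vector field `v[μ (iΔt)]`. -/
def Scheme1 (n : ℕ) (v : Measure (En n) → En n → En n) (μ₀ : Measure (En n))
    (Δt T : ℝ) (μ : ℝ → Measure (En n)) : Prop :=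
  μ 0 = μ₀ ∧
  ∀ i : ℕ, ∀ t : ℝ, (i : ℝ) * Δt ≤ t → t ≤ ((i : ℝ) + 1) * Δt → t ≤ T →
    ∃ Φ : ℝ → En n → En n, IsFlow n (v (μ ((i : ℝ) * Δt))) Φ ∧
      μ t = Measure.map (Φ (t - (i : ℝ) * Δt)) (μ ((i : ℝ) * Δt))

/-- Weak (distributional) solution of `∂ₜ μₜ + ∇·(v[μₜ] μₜ) = 0` on `[0,T]`:
for every test function `f ∈ C_c^∞([0,T] × ℝⁿ)`,
`∫_0^T ∫ (∂ₜ f + v[μₜ]·∇f) dμₜ dt = 0`. -/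
def IsWeakSolution (n : ℕ) (v : Measure (En n) → En n → En n) (T : ℝ)
    (μ : ℝ → Measure (En n)) : Prop :=
  ∀ f : ℝ → En n → ℝ,
    ContDiff ℝ (⊤ : ℕ∞) (Function.uncurry f) →
    HasCompactSupport (Function.uncurry f) →
    (∫ t in Icc (0 : ℝ) T,
      ∫ x, (deriv (fun s => f s x) t + ⟪v (μ t) x, gradient (fun y => f t y) x⟫)
        ∂(μ t)) = 0

/-- Continuity in time with respect to the Wasserstein distance `W_p`, on `[0,T]`. -/
def WpContinuousOn (n : ℕ) (p T : ℝ) (μ : ℝ → Measure (En n)) : Prop :=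
  ∀ t ∈ Icc (0 : ℝ) T, ∀ ε > 0, ∃ δ > 0, ∀ s ∈ Icc (0 : ℝ) T, |s - t| < δ →
    Wp n p (μ s) (μ t) < ε

/-- The axis-parallel grid cell of side `Δx` indexed by `k : Fin n → ℤ`. -/
def gridCell (n : ℕ) (Δx : ℝ) (k : Fin n → ℤ) : Set (En n) :=
  {x | ∀ i, (k i : ℝ) * Δx ≤ x i ∧ x i < ((k i : ℝ) + 1) * Δx}

/-- The index of the grid cell of side `Δx` containing `x`. -/
def gridIdx (n : ℕ) (Δx : ℝ) (x : En n) : Fin n → ℤ := fun i => ⌊x i / Δx⌋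

/-- Grid discretization `G[μ]`: the measure which, on each cell `□` of the grid of
side `Δx`, has constant density `μ(□)/Δxⁿ` with respect to Lebesgue measure. -/
def gridDisc (n : ℕ) (Δx : ℝ) (μ : Measure (En n)) : Measure (En n) :=
  (volume : Measure (En n)).withDensity
    (fun x => μ (gridCell n Δx (gridIdx n Δx x)) / ENNReal.ofReal (Δx ^ n))

/-- `L¹` distance between two measures, via their densities (Radon–Nikodym
derivatives) with respect to Lebesgue measure. -/
def L1dist (n : ℕ) (μ ν : Measure (En n)) : ℝ :=
  ∫ x, |(μ.rnDeriv (volume : Measure (En n)) x).toReal -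
        (ν.rnDeriv (volume : Measure (En n)) x).toReal|



/-! ### Auxiliary lemmas -/

section Aux

lemma pi_lipschitz_image_null {n : ℕ} {C : NNReal} {g : (Fin n → ℝ) → (Fin n → ℝ)}
    (hg : LipschitzWith C g) {s : Set (Fin n → ℝ)} (hs : volume s = 0) :
    volume (g '' s) = 0 := by
  have h1 : (μH[(n : ℝ)] : Measure (Fin n → ℝ)) = volume := by
    simpa using (hausdorffMeasure_pi_real (ι := Fin n))
  rw [← h1] at hs ⊢
  have := hg.hausdorffMeasure_image_le (d := (n : ℝ)) (by positivity) s
  rw [hs, mul_zero] at this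
  exact le_antisymm this zero_le

lemma lipschitz_image_null {n : ℕ} {C : NNReal} {f : En n → En n}
    (hf : LipschitzWith C f) {s : Set (En n)} (hs : volume s = 0) :
    volume (f '' s) = 0 := by
  classical
  set e := (MeasurableEquiv.toLp 2 (Fin n → ℝ)).symm with he
  have hmp : MeasurePreserving e volume volume :=
    EuclideanSpace.volume_preserving_symm_measurableEquiv_toLp (Fin n)
  have hmps : MeasurePreserving e.symm volume volume := hmp.symm e
  -- e and e.symm are Lipschitz
  have hel : LipschitzWith 1 (⇑e) := by
    exact PiLp.lipschitzWith_ofLp 2 _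
  have hesl : LipschitzWith ((Fintype.card (Fin n) : NNReal) ^ (1 / (2:ENNReal)).toReal) (⇑e.symm) := by
    refine (PiLp.antilipschitzWith_ofLp 2 (fun _ : Fin n => ℝ)).to_rightInverse ?_
    intro x
    have : e (e.symm x) = x := e.apply_symm_apply x
    exact this
  set D := ((Fintype.card (Fin n) : NNReal) ^ (1 / (2:ENNReal)).toReal) with hDdef
  have hD := hesl
  -- measurable superset
  obtain ⟨s', hss', hms', hns'⟩ := exists_measurable_superset_of_null hs
  have key : volume (f '' s') = 0 := by
    have himg : f '' s' = ⇑e.symm '' ((⇑e ∘ f ∘ ⇑e.symm) '' (⇑e '' s')) := by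
      rw [← image_comp, ← image_comp]
      congr 1
    have h1 : volume (⇑e '' s') = 0 := by
      rw [e.image_eq_preimage_symm]
      rw [hmps.measure_preimage hms'.nullMeasurableSet]
      exact hns'
    have h2 : volume ((⇑e ∘ f ∘ ⇑e.symm) '' (⇑e '' s')) = 0 := by
      have hlip : LipschitzWith (1 * (C * D)) (⇑e ∘ f ∘ ⇑e.symm) :=
        hel.comp (hf.comp hD)
      exact pi_lipschitz_image_null hlip h1
    obtain ⟨B, hB1, hB2, hB3⟩ := exists_measurable_superset_of_null h2
    have : ⇑e.symm '' ((⇑e ∘ f ∘ ⇑e.symm) '' (⇑e '' s')) ⊆ ⇑e.symm '' B := image_mono hB1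
    refine measure_mono_null (himg ▸ this) ?_
    rw [e.symm.image_eq_preimage_symm]
    simp only [MeasurableEquiv.symm_symm]
    rw [hmp.measure_preimage hB2.nullMeasurableSet]
    exact hB3
  exact measure_mono_null (image_mono hss') key

lemma Wp_nonneg_mem {n : ℕ} {p : ℝ} {μ ν : Measure (En n)} {c : ℝ}
    (hc : c ∈ { c : ℝ | ∃ γ : En n → En n, Measurable γ ∧ Measure.map γ μ = ν ∧
      c = (∫ x, ‖γ x - x‖ ^ p ∂μ) ^ (1 / p) }) : 0 ≤ c := by
  obtain ⟨γ, -, -, rfl⟩ := hc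
  exact Real.rpow_nonneg (integral_nonneg fun x => Real.rpow_nonneg (norm_nonneg _) _) _

lemma Wp_le_bound {n : ℕ} {p : ℝ} (hp : 1 ≤ p) {μ ν : Measure (En n)}
    [IsProbabilityMeasure μ] {γ : En n → En n} (hγ : Measurable γ)
    (hmap : Measure.map γ μ = ν) {C : ℝ} (hC : 0 ≤ C)
    (hae : ∀ᵐ x ∂μ, ‖γ x - x‖ ≤ C) : Wp n p μ ν ≤ C := by
  have hp0 : 0 < p := lt_of_lt_of_le one_pos hp
  have hmem : (∫ x, ‖γ x - x‖ ^ p ∂μ) ^ (1 / p) ∈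
      { c : ℝ | ∃ γ' : En n → En n, Measurable γ' ∧ Measure.map γ' μ = ν ∧
        c = (∫ x, ‖γ' x - x‖ ^ p ∂μ) ^ (1 / p) } := ⟨γ, hγ, hmap, rfl⟩
  have hbdd : BddBelow { c : ℝ | ∃ γ' : En n → En n, Measurable γ' ∧ Measure.map γ' μ = ν ∧
      c = (∫ x, ‖γ' x - x‖ ^ p ∂μ) ^ (1 / p) } := ⟨0, fun c hc => Wp_nonneg_mem hc⟩
  refine le_trans (csInf_le hbdd hmem) ?_
  -- now bound the element
  have hmeas : Measurable fun x => ‖γ x - x‖ ^ p :=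
    (Real.continuous_rpow_const hp0.le).measurable.comp (hγ.sub measurable_id).norm
  have hint : Integrable (fun x => ‖γ x - x‖ ^ p) μ := by
    refine Integrable.mono' (integrable_const (C ^ p)) hmeas.aestronglyMeasurable ?_
    filter_upwards [hae] with x hx
    rw [Real.norm_eq_abs, abs_of_nonneg (Real.rpow_nonneg (norm_nonneg _) _)]
    exact Real.rpow_le_rpow (norm_nonneg _) hx hp0.le
  have hle : (∫ x, ‖γ x - x‖ ^ p ∂μ) ≤ C ^ p := by
    have := integral_mono_ae hint (integrable_const (C ^ p)) ?_
    · simpa using this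
    · filter_upwards [hae] with x hx
      exact Real.rpow_le_rpow (norm_nonneg _) hx hp0.le
  calc (∫ x, ‖γ x - x‖ ^ p ∂μ) ^ (1 / p)
      ≤ (C ^ p) ^ (1 / p) := Real.rpow_le_rpow
        (integral_nonneg fun x => Real.rpow_nonneg (norm_nonneg _) _) hle (by positivity)
    _ = C := by
        rw [← Real.rpow_mul hC, mul_one_div_cancel hp0.ne', Real.rpow_one]

lemma ae_mem_image_of_map {n : ℕ} {μ₀ : Measure (En n)} {S : Set (En n)}
    (hS : IsCompact S) (hS0 : μ₀ Sᶜ = 0) {Θ : En n → En n} (hΘm : Measurable Θ)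
    (hΘc : Continuous Θ) : ∀ᵐ x ∂(Measure.map Θ μ₀), x ∈ Θ '' S := by
  have hcl : MeasurableSet (Θ '' S) := (hS.image hΘc).isClosed.measurableSet
  rw [ae_iff]
  have : {x | ¬ x ∈ Θ '' S} = (Θ '' S)ᶜ := rfl
  rw [this, Measure.map_apply hΘm hcl.compl]
  refine measure_mono_null ?_ hS0
  intro x hx
  simp only [mem_preimage, mem_compl_iff] at hx ⊢
  exact fun hxS => hx (mem_image_of_mem _ hxS)

variable {n : ℕ} {w : En n → En n} {C : NNReal}

lemma ode_unique_global (hw : LipschitzWith C w) {f g : ℝ → En n}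
    (hf : ∀ t, HasDerivAt f (w (f t)) t) (hg : ∀ t, HasDerivAt g (w (g t)) t)
    {a : ℝ} (hfg : f a = g a) : ∀ t, f t = g t := by
  intro t
  rcases le_total a t with h | h
  · exact ODE_solution_unique (v := fun _ => w) (fun _ => hw)
      (fun s _ => (hf s).continuousAt.continuousWithinAt)
      (fun s _ => (hf s).hasDerivWithinAt)
      (fun s _ => (hg s).continuousAt.continuousWithinAt)
      (fun s _ => (hg s).hasDerivWithinAt) hfg ⟨h, le_rfl⟩
  · -- time reversal
    have hrev : ∀ (F : ℝ → En n), (∀ u, HasDerivAt F (w (F u)) u) →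
        ∀ s, HasDerivAt (fun u => F (2 * a - u)) (-(w (F (2 * a - s)))) s := by
      intro F hF s
      have h1 : HasDerivAt (fun u : ℝ => 2 * a - u) (-1) s := by
        simpa using (hasDerivAt_id' s).const_sub (2 * a)
      have := (hF (2 * a - s)).scomp s h1
      simpa [Function.comp_def] using this
    have key := ODE_solution_unique (v := fun _ y => -(w y)) (fun _ => hw.neg)
      (f := fun u => f (2 * a - u)) (g := fun u => g (2 * a - u))
      (fun s _ => ((hrev f hf s).continuousAt).continuousWithinAt)
      (fun s _ => by simpa using (hrev f hf s).hasDerivWithinAt)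
      (fun s _ => ((hrev g hg s).continuousAt).continuousWithinAt)
      (fun s _ => by simpa using (hrev g hg s).hasDerivWithinAt)
      (a := a) (b := 2 * a - t) (by show f (2*a - a) = g (2*a - a); rw [show 2*a - a = a by ring]; exact hfg) ⟨by linarith, le_rfl⟩
    simpa using key

variable {Φ : ℝ → En n → En n}

lemma flow_eq (hw : LipschitzWith C w) (hΦ : IsFlow n w Φ) {Φ' : ℝ → En n → En n}
    (hΦ' : IsFlow n w Φ') (t : ℝ) (x : En n) : Φ t x = Φ' t x :=
  ode_unique_global hw (hΦ.2 x) (hΦ'.2 x) (a := 0) (by rw [hΦ.1, hΦ'.1]) t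

lemma flow_comp (hw : LipschitzWith C w) (hΦ : IsFlow n w Φ) (s t : ℝ) (x : En n) :
    Φ (s + t) x = Φ s (Φ t x) := by
  have hf : ∀ u, HasDerivAt (fun u => Φ (u + t) x) (w (Φ (u + t) x)) u := by
    intro u
    have h1 : HasDerivAt (fun u : ℝ => u + t) 1 u := (hasDerivAt_id u).add_const t
    have := (hΦ.2 x (u + t)).scomp u h1
    simpa [Function.comp_def] using this
  have := ode_unique_global hw hf (hΦ.2 (Φ t x)) (a := 0)
    (by simp [hΦ.1]) s
  exact this

lemma flow_inv (hw : LipschitzWith C w) (hΦ : IsFlow n w Φ) (t : ℝ) (x : En n) :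
    Φ (-t) (Φ t x) = x := by
  have := (flow_comp hw hΦ (-t) t x).symm
  simpa [hΦ.1] using this

lemma flow_dist_le (hw : LipschitzWith C w) (hΦ : IsFlow n w Φ) (t : ℝ) (x y : En n) :
    dist (Φ t x) (Φ t y) ≤ dist x y * Real.exp (C * |t|) := by
  rcases le_total 0 t with h | h
  · have := dist_le_of_trajectories_ODE (v := fun _ => w) (fun _ => hw)
      (f := fun s => Φ s x) (g := fun s => Φ s y) (a := 0) (b := t) (δ := dist x y)
      (fun s _ => (hΦ.2 x s).continuousAt.continuousWithinAt)
      (fun s _ => (hΦ.2 x s).hasDerivWithinAt)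
      (fun s _ => (hΦ.2 y s).continuousAt.continuousWithinAt)
      (fun s _ => (hΦ.2 y s).hasDerivWithinAt)
      (by simp [hΦ.1]) t ⟨h, le_rfl⟩
    simpa [abs_of_nonneg h] using this
  · have hrev : ∀ (z : En n) (s : ℝ), HasDerivAt (fun u => Φ (-u) z) (-(w (Φ (-s) z))) s := by
      intro z s
      have h1 : HasDerivAt (fun u : ℝ => -u) (-1) s := by simpa using hasDerivAt_neg' (x := s)
      have := (hΦ.2 z (-s)).scomp s h1
      simpa [Function.comp_def] using this
    have := dist_le_of_trajectories_ODE (v := fun _ y => -(w y)) (fun _ => hw.neg)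
      (f := fun s => Φ (-s) x) (g := fun s => Φ (-s) y) (a := 0) (b := -t) (δ := dist x y)
      (fun s _ => (hrev x s).continuousAt.continuousWithinAt)
      (fun s _ => (hrev x s).hasDerivWithinAt)
      (fun s _ => (hrev y s).continuousAt.continuousWithinAt)
      (fun s _ => (hrev y s).hasDerivWithinAt)
      (by simp [hΦ.1]) (-t) ⟨by linarith, le_rfl⟩
    simpa [abs_of_nonpos h] using this

lemma flow_lipschitz (hw : LipschitzWith C w) (hΦ : IsFlow n w Φ) (t : ℝ) :
    LipschitzWith (Real.exp (C * |t|)).toNNReal (Φ t) := by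
  refine LipschitzWith.of_dist_le_mul fun x y => ?_
  rw [Real.coe_toNNReal _ (Real.exp_nonneg _), mul_comm]
  exact flow_dist_le hw hΦ t x y

lemma flow_cont (hw : LipschitzWith C w) (hΦ : IsFlow n w Φ) (t : ℝ) :
    Continuous (Φ t) := (flow_lipschitz hw hΦ t).continuous

lemma flow_speed (hΦ : IsFlow n w Φ) {M : ℝ} (hM : ∀ x, ‖w x‖ ≤ M) (x : En n) (s t : ℝ) :
    ‖Φ t x - Φ s x‖ ≤ M * |t - s| := by
  have := Convex.norm_image_sub_le_of_norm_hasDerivWithin_le (𝕜 := ℝ)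
    (f := fun u => Φ u x) (f' := fun u => w (Φ u x)) (s := univ) (C := M)
    (fun u _ => (hΦ.2 x u).hasDerivWithinAt) (fun u _ => hM _) convex_univ
    (mem_univ s) (mem_univ t)
  simpa [Real.norm_eq_abs] using this

lemma flow_memM (hw : LipschitzWith C w) (hΦ : IsFlow n w Φ) {μ : Measure (En n)}
    (hμ : MemM n μ) (t : ℝ) : MemM n (Measure.map (Φ t) μ) := by
  obtain ⟨hprob, hac, Kc, hKc, hK0⟩ := hμ
  have hcont := flow_cont hw hΦ t
  have hmeas : Measurable (Φ t) := hcont.measurable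
  refine ⟨?_, ?_, ?_⟩
  · haveI := hprob
    exact Measure.isProbabilityMeasure_map hmeas.aemeasurable
  · refine Measure.AbsolutelyContinuous.mk fun s hs hvol => ?_
    rw [Measure.map_apply hmeas hs]
    have hpre : Φ t ⁻¹' s = Φ (-t) '' s := by
      ext x
      constructor
      · intro hx
        exact ⟨Φ t x, hx, flow_inv hw hΦ t x⟩
      · rintro ⟨y, hy, rfl⟩
        have : Φ t (Φ (-t) y) = y := by
          have := flow_inv hw hΦ (-t) y
          simpa using this
        simpa [mem_preimage, this] using hy
    rw [hpre]
    exact hac (lipschitz_image_null (flow_lipschitz hw hΦ (-t)) hvol)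
  · refine ⟨Φ t '' Kc, hKc.image hcont, ?_⟩
    rw [Measure.map_apply hmeas (hKc.image hcont).isClosed.measurableSet.compl]
    refine measure_mono_null ?_ hK0
    intro x hx
    simp only [mem_preimage, mem_compl_iff] at hx ⊢
    exact fun hxK => hx (mem_image_of_mem _ hxK)

end Aux
section Aux2
lemma gb_formula {L : ℝ} (hL : L ≠ 0) (d ε x : ℝ) :
    gronwallBound d L ε x = d * Real.exp (L * x) + ε / L * (Real.exp (L * x) - 1) := by
  rw [gronwallBound_of_K_ne_0 hL]

lemma gb_nonneg {L d ε x : ℝ} (hL : 0 < L) (hd : 0 ≤ d) (hε : 0 ≤ ε) (hx : 0 ≤ x) :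
    0 ≤ gronwallBound d L ε x := by
  rw [gb_formula hL.ne']
  have h1 : (1 : ℝ) ≤ Real.exp (L * x) := Real.one_le_exp (by positivity)
  have h2 : 0 ≤ ε / L := by positivity
  nlinarith

lemma gb_mono {L d ε x y : ℝ} (hL : 0 < L) (hd : 0 ≤ d) (hε : 0 ≤ ε) (hxy : x ≤ y) :
    gronwallBound d L ε x ≤ gronwallBound d L ε y := by
  rw [gb_formula hL.ne', gb_formula hL.ne']
  have h1 : Real.exp (L * x) ≤ Real.exp (L * y) :=
    Real.exp_le_exp.2 (mul_le_mul_of_nonneg_left hxy hL.le)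
  have h2 : 0 ≤ ε / L := by positivity
  nlinarith

-- the recursion bound
lemma gb_rec_bound {L Kc M Δ δ : ℝ} (hL : 0 < L) (hK : 0 < Kc) (hM : 0 < M)
    (hΔ : 0 < Δ) (hδ : 0 < δ) {cj : ℝ} (hcj : 0 ≤ cj)
    (j : ℕ) (hbd : cj ≤ M * Δ * (Real.exp ((L + Kc) * δ) ^ j - 1)) :
    gronwallBound cj L (Kc * (cj + M * Δ)) δ ≤ M * Δ * (Real.exp ((L + Kc) * δ) ^ (j + 1) - 1) := by
  rw [gb_formula hL.ne']
  set E := Real.exp (L * δ) with hE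
  set A := Real.exp ((L + Kc) * δ) with hA
  have hE1 : (1 : ℝ) ≤ E := Real.one_le_exp (by positivity)
  have hA1 : (1 : ℝ) ≤ A := Real.one_le_exp (by positivity)
  have hEd : E - 1 ≤ L * δ * E := by
    have := Real.add_one_le_exp (-(L * δ))
    have hEpos : 0 < E := Real.exp_pos _
    have : Real.exp (-(L * δ)) = E⁻¹ := by rw [hE, ← Real.exp_neg]
    have hinv : Real.exp (-(L * δ)) * E = 1 := by rw [this]; exact inv_mul_cancel₀ hEpos.ne'
    nlinarith [mul_le_mul_of_nonneg_right (Real.add_one_le_exp (-(L * δ))) hEpos.le]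
  have hEA : E * (1 + Kc * δ) ≤ A := by
    have h2 : Kc * δ + 1 ≤ Real.exp (Kc * δ) := Real.add_one_le_exp _
    have : A = E * Real.exp (Kc * δ) := by
      rw [hA, hE, ← Real.exp_add]; ring_nf
    rw [this]
    nlinarith [Real.exp_pos (L * δ)]
  have hApj : (1:ℝ) ≤ A ^ j := one_le_pow₀ hA1
  have hApos : (0:ℝ) < A := Real.exp_pos _
  have hMΔ : 0 ≤ M * Δ := by positivity
  have hfrac : Kc * (cj + M * Δ) / L * (E - 1) ≤ Kc * (cj + M * Δ) * δ * E := by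
    rw [div_mul_eq_mul_div, div_le_iff₀ hL]
    have ha : 0 ≤ Kc * (cj + M * Δ) := by positivity
    nlinarith [mul_le_mul_of_nonneg_left hEd ha]
  have step1 : cj * E + Kc * (cj + M * Δ) * δ * E ≤ cj * A + M * Δ * (A - E) := by
    nlinarith [mul_le_mul_of_nonneg_left hEA hcj, mul_le_mul_of_nonneg_left hEA hMΔ]
  have step2 : cj * A + M * Δ * (A - E) ≤ M * Δ * (A ^ (j + 1) - 1) := by
    have h1 : cj * A ≤ M * Δ * (A ^ j - 1) * A := mul_le_mul_of_nonneg_right hbd hApos.le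
    have h2 : M * Δ * (A ^ j - 1) * A = M * Δ * (A ^ (j + 1) - A) := by rw [pow_succ]; ring
    nlinarith [mul_le_mul_of_nonneg_left hE1 hMΔ]
  linarith

lemma lipschitz_of_memM {n : ℕ} {p L M K : ℝ} {v : Measure (En n) → En n → En n}
    (hH : HypH n p v L M K) {μ : Measure (En n)} (hμ : MemM n μ) :
    LipschitzWith L.toNNReal (v μ) := by
  refine LipschitzWith.of_dist_le_mul fun x y => ?_
  rw [Real.coe_toNNReal _ hH.1.le, dist_eq_norm, dist_eq_norm]
  exact hH.2.2.2.2.1 μ hμ x y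

structure Pkg (n : ℕ) (v : Measure (En n) → En n → En n) (μ₀ : Measure (En n))
    (Δ : ℝ) (N : ℕ) (μ : ℝ → Measure (En n)) where
  F : ℕ → ℝ → En n → En n
  G : ℕ → En n → En n
  H : ℕ → En n → En n
  hG0 : ∀ x, G 0 x = x
  hGs : ∀ i x, G (i + 1) x = F i Δ (G i x)
  mem : ∀ i ≤ N, MemM n (μ ((i : ℝ) * Δ))
  grid : ∀ i ≤ N, μ ((i : ℝ) * Δ) = Measure.map (G i) μ₀
  flow : ∀ i < N, IsFlow n (v (μ ((i : ℝ) * Δ))) (F i)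
  contG : ∀ i ≤ N, Continuous (G i)
  contH : ∀ i ≤ N, Continuous (H i)
  inv1 : ∀ i ≤ N, ∀ x, H i (G i x) = x
  eqn : ∀ i < N, ∀ t, (i : ℝ) * Δ ≤ t → t ≤ ((i : ℝ) + 1) * Δ →
    μ t = Measure.map (fun x => F i (t - (i : ℝ) * Δ) (G i x)) μ₀

lemma pkg_exists {n : ℕ} {p L M K : ℝ} {v : Measure (En n) → En n → En n}
    (hH : HypH n p v L M K) {μ₀ : Measure (En n)} (hμ₀ : MemM n μ₀)
    {Δ T : ℝ} (hΔ : 0 < Δ) {N : ℕ} (hNT : (N : ℝ) * Δ = T)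
    {μ : ℝ → Measure (En n)} (hs : Scheme1 n v μ₀ Δ T μ) :
    Nonempty (Pkg n v μ₀ Δ N μ) := by
  classical
  have hgrid_le : ∀ i : ℕ, i < N → (i : ℝ) * Δ < T := by
    intro i hi
    rw [← hNT]
    have : (i : ℝ) < N := by exact_mod_cast hi
    nlinarith
  have hex : ∀ i : ℕ, i < N → ∃ Φ : ℝ → En n → En n, IsFlow n (v (μ ((i : ℝ) * Δ))) Φ := by
    intro i hi
    obtain ⟨Φ, hΦ, -⟩ := hs.2 i ((i : ℝ) * Δ) le_rfl (by nlinarith) (hgrid_le i hi).le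
    exact ⟨Φ, hΦ⟩
  set F : ℕ → ℝ → En n → En n := fun i =>
    if h : ∃ Φ : ℝ → En n → En n, IsFlow n (v (μ ((i : ℝ) * Δ))) Φ then h.choose
    else fun _ x => x with hFdef
  have hF : ∀ i < N, IsFlow n (v (μ ((i : ℝ) * Δ))) (F i) := by
    intro i hi
    simp only [hFdef, dif_pos (hex i hi)]
    exact (hex i hi).choose_spec
  set G : ℕ → En n → En n := fun i => Nat.rec (fun x => x) (fun i Gi => fun x => F i Δ (Gi x)) i
    with hGdef
  set H : ℕ → En n → En n := fun i => Nat.rec (fun x => x) (fun i Hi => fun x => Hi (F i (-Δ) x)) i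
    with hHdef
  -- the step equation, given good data at step i
  have step_eqn : ∀ i < N, MemM n (μ ((i : ℝ) * Δ)) →
      ∀ t, (i : ℝ) * Δ ≤ t → t ≤ ((i : ℝ) + 1) * Δ →
      μ t = Measure.map (F i (t - (i : ℝ) * Δ)) (μ ((i : ℝ) * Δ)) := by
    intro i hi hmem t h1 h2
    have ht : t ≤ T := by
      rw [← hNT]
      have : (i : ℝ) + 1 ≤ (N : ℝ) := by exact_mod_cast hi
      nlinarith
    obtain ⟨Φ', hΦ', hmap⟩ := hs.2 i t h1 h2 ht
    have hww := lipschitz_of_memM hH hmem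
    have heq : ∀ x, Φ' (t - (i : ℝ) * Δ) x = F i (t - (i : ℝ) * Δ) x :=
      fun x => flow_eq hww hΦ' (hF i hi) _ x
    rw [hmap]
    congr 1
    exact funext heq
  -- main induction
  have main : ∀ i ≤ N, MemM n (μ ((i : ℝ) * Δ)) ∧ μ ((i : ℝ) * Δ) = Measure.map (G i) μ₀ ∧
      Continuous (G i) ∧ Continuous (H i) ∧ (∀ x, H i (G i x) = x) := by
    intro i
    induction i with
    | zero =>
      intro _
      have h0 : ((0 : ℕ) : ℝ) * Δ = 0 := by norm_num
      rw [h0, hs.1]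
      refine ⟨hμ₀, ?_, continuous_id, continuous_id, fun x => rfl⟩
      exact (Measure.map_id).symm
    | succ i ih =>
      intro hiN
      have hi : i < N := Nat.lt_of_succ_le hiN
      obtain ⟨hmem, hgrid, hcG, hcH, hinv⟩ := ih hi.le
      have hww := lipschitz_of_memM hH hmem
      have hflow := hF i hi
      have hstep := step_eqn i hi hmem (((i : ℝ) + 1) * Δ) (by nlinarith) le_rfl
      have hoff : ((i : ℝ) + 1) * Δ - (i : ℝ) * Δ = Δ := by ring
      rw [hoff] at hstep
      have hcast : (((i + 1 : ℕ)) : ℝ) * Δ = ((i : ℝ) + 1) * Δ := by push_cast; ring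
      have hmem' : MemM n (μ (((i + 1 : ℕ) : ℝ) * Δ)) := by
        rw [hcast, hstep]
        exact flow_memM hww hflow hmem Δ
      have hcΦ : Continuous (F i Δ) := flow_cont hww hflow Δ
      have hcΦ' : Continuous (F i (-Δ)) := flow_cont hww hflow (-Δ)
      refine ⟨hmem', ?_, hcΦ.comp hcG, hcH.comp hcΦ', ?_⟩
      · rw [hcast, hstep, hgrid,
          Measure.map_map hcΦ.measurable hcG.measurable]
        rfl
      · intro x
        show H i (F i (-Δ) (F i Δ (G i x))) = x
        rw [flow_inv hww hflow Δ (G i x), hinv x]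
  refine ⟨⟨F, G, H, fun x => rfl, fun i x => rfl,
    fun i hi => (main i hi).1, fun i hi => (main i hi).2.1, hF,
    fun i hi => (main i hi).2.2.1, fun i hi => (main i hi).2.2.2.1,
    fun i hi => (main i hi).2.2.2.2, ?_⟩⟩
  intro i hi t h1 h2
  obtain ⟨hmem, hgrid, hcG, -, -⟩ := main i hi.le
  have hww := lipschitz_of_memM hH hmem
  have hstep := step_eqn i hi hmem t h1 h2
  rw [hstep, hgrid, Measure.map_map (flow_cont hww (hF i hi) _).measurable hcG.measurable]
  rfl

lemma Wp_le_of_two_maps {n : ℕ} {p : ℝ} (hp : 1 ≤ p) {μ₀ : Measure (En n)}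
    (hprob : IsProbabilityMeasure μ₀) {S : Set (En n)} (hS : IsCompact S) (hS0 : μ₀ Sᶜ = 0)
    {Θ₁ Θ₂ : En n → En n} (h1c : Continuous Θ₁) (h2c : Continuous Θ₂)
    {Θinv : En n → En n} (hinvc : Continuous Θinv) (hinv : ∀ y, Θinv (Θ₁ y) = y)
    {C : ℝ} (hC : 0 ≤ C) (hbd : ∀ z ∈ S, ‖Θ₂ z - Θ₁ z‖ ≤ C) :
    Wp n p (Measure.map Θ₁ μ₀) (Measure.map Θ₂ μ₀) ≤ C := by
  haveI := hprob
  haveI : IsProbabilityMeasure (Measure.map Θ₁ μ₀) :=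
    Measure.isProbabilityMeasure_map h1c.measurable.aemeasurable
  have hγm : Measurable (fun y => Θ₂ (Θinv y)) := (h2c.comp hinvc).measurable
  have hmap : Measure.map (fun y => Θ₂ (Θinv y)) (Measure.map Θ₁ μ₀) = Measure.map Θ₂ μ₀ := by
    rw [Measure.map_map hγm h1c.measurable]
    congr 1
    funext z
    show Θ₂ (Θinv (Θ₁ z)) = Θ₂ z
    rw [hinv z]
  refine Wp_le_bound hp hγm hmap hC ?_
  filter_upwards [ae_mem_image_of_map hS hS0 h1c.measurable h1c] with y hy
  obtain ⟨z, hz, rfl⟩ := hy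
  show ‖Θ₂ (Θinv (Θ₁ z)) - Θ₁ z‖ ≤ C
  rw [hinv z]
  exact hbd z hz

set_option maxHeartbeats 1000000 in
lemma key_compare {n : ℕ} {p L M K T : ℝ} (hp : 1 ≤ p) (hT : 0 < T)
    {v : Measure (En n) → En n → En n} (hH : HypH n p v L M K)
    {μ₀ : Measure (En n)} (hμ₀ : MemM n μ₀)
    {k l : ℕ} (hkl : k ≤ l) {μk μl : ℝ → Measure (En n)}
    (hsk : Scheme1 n v μ₀ (T / 2 ^ k) T μk) (hsl : Scheme1 n v μ₀ (T / 2 ^ l) T μl) :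
    ∀ t ∈ Icc (0 : ℝ) T,
      Wp n p (μk t) (μl t) ≤ M * (T / 2 ^ k) * Real.exp ((L + K) * T) ∧
      Wp n p (μl t) (μk t) ≤ M * (T / 2 ^ k) * Real.exp ((L + K) * T) := by
  classical
  obtain ⟨hL, hM, hK, -, hLipv, hBdd, hWLip⟩ := id hH
  set Δ : ℝ := T / 2 ^ k with hΔdef
  set δ : ℝ := T / 2 ^ l with hδdef
  have hΔ : 0 < Δ := by positivity
  have hδ : 0 < δ := by positivity
  set m : ℕ := 2 ^ (l - k) with hmdef
  have hm : 0 < m := pow_pos (by norm_num) _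
  have hml : 2 ^ l = 2 ^ k * m := by
    rw [hmdef, ← pow_add, Nat.add_sub_cancel' hkl]
  have hmc : ((m : ℕ) : ℝ) = (2 : ℝ) ^ (l - k) := by push_cast [hmdef]; ring
  have h2l : (2 : ℝ) ^ l = 2 ^ k * 2 ^ (l - k) := by
    rw [← pow_add, Nat.add_sub_cancel' hkl]
  have hΔm : Δ = (m : ℝ) * δ := by
    rw [hΔdef, hδdef, hmc, h2l]
    field_simp
  have hNTk : ((2 ^ k : ℕ) : ℝ) * Δ = T := by
    rw [hΔdef]; push_cast; field_simp
  have hNTl : ((2 ^ l : ℕ) : ℝ) * δ = T := by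
    rw [hδdef]; push_cast; field_simp
  obtain ⟨Pk⟩ := pkg_exists hH hμ₀ hΔ hNTk hsk
  obtain ⟨Pl⟩ := pkg_exists hH hμ₀ hδ hNTl hsl
  obtain ⟨S, hScomp, hS0⟩ := hμ₀.2.2
  haveI hprob0 : IsProbabilityMeasure μ₀ := hμ₀.1
  -- index facts
  have idx : ∀ j : ℕ, j < 2 ^ l → j / m < 2 ^ k ∧
      ((j / m : ℕ) : ℝ) * Δ ≤ (j : ℝ) * δ ∧
      ((j : ℝ) + 1) * δ ≤ (((j / m : ℕ) : ℝ) + 1) * Δ := by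
    intro j hj
    have h1 : j / m < 2 ^ k := (Nat.div_lt_iff_lt_mul hm).2 (by rw [← hml]; exact hj)
    have h2 : (j / m) * m ≤ j := Nat.div_mul_le_self j m
    have h3 : j < (j / m + 1) * m := by
      have hmod := Nat.div_add_mod j m
      have := Nat.mod_lt j hm
      nlinarith [Nat.div_add_mod j m, Nat.mod_lt j hm]
    refine ⟨h1, ?_, ?_⟩
    · have : (((j / m) * m : ℕ) : ℝ) ≤ (j : ℝ) := Nat.cast_le.2 h2
      push_cast at this
      rw [hΔm]
      nlinarith
    · have : ((j + 1 : ℕ) : ℝ) ≤ (((j / m + 1) * m : ℕ) : ℝ) := Nat.cast_le.2 h3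
      push_cast at this
      rw [hΔm]
      nlinarith
  -- the sequence of bounds
  set c : ℕ → ℝ := fun j =>
    Nat.rec (0 : ℝ) (fun _ cj => gronwallBound cj L (K * (cj + M * Δ)) δ) j with hcdef
  have hc0 : c 0 = 0 := rfl
  have hcs : ∀ j, c (j + 1) = gronwallBound (c j) L (K * (c j + M * Δ)) δ := fun j => rfl
  have hcnn : ∀ j, 0 ≤ c j := by
    intro j
    induction j with
    | zero => simp [hc0]
    | succ j ih =>
      rw [hcs]
      exact gb_nonneg hL ih (by positivity) hδ.le
  have hcb : ∀ j, c j ≤ M * Δ * (Real.exp ((L + K) * δ) ^ j - 1) := by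
    intro j
    induction j with
    | zero => simp [hc0]
    | succ j ih =>
      rw [hcs]
      exact gb_rec_bound hL hK hM hΔ hδ (hcnn j) j ih
  have hcT : ∀ j ≤ 2 ^ l, c j ≤ M * Δ * Real.exp ((L + K) * T) := by
    intro j hj
    refine (hcb j).trans ?_
    have hLK : 0 ≤ L + K := by linarith
    have h1 : Real.exp ((L + K) * δ) ^ j = Real.exp ((L + K) * δ * j) := by
      rw [← Real.exp_nat_mul]; ring_nf
    have h2 : (L + K) * δ * j ≤ (L + K) * T := by
      have hj' : (j : ℝ) ≤ ((2 ^ l : ℕ) : ℝ) := Nat.cast_le.2 hj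
      have : δ * (j : ℝ) ≤ T := by
        rw [← hNTl]
        nlinarith
      nlinarith
    have h3 : Real.exp ((L + K) * δ) ^ j - 1 ≤ Real.exp ((L + K) * T) := by
      rw [h1]
      have := Real.exp_le_exp.2 h2
      linarith [Real.exp_pos ((L + K) * δ * j)]
    have hMΔ : 0 ≤ M * Δ := by positivity
    exact mul_le_mul_of_nonneg_left h3 hMΔ
  -- Wasserstein bound between grid measures, given the start estimate
  have wpGrid : ∀ j : ℕ, j < 2 ^ l →
      (∀ x ∈ S, ‖Pk.F (j / m) ((j : ℝ) * δ - ((j / m : ℕ) : ℝ) * Δ) (Pk.G (j / m) x)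
        - Pl.G j x‖ ≤ c j) →
      Wp n p (μl ((j : ℝ) * δ)) (μk (((j / m : ℕ) : ℝ) * Δ)) ≤ c j + M * Δ := by
    intro j hj hstart
    obtain ⟨hilt, hiΔle, hjΔle⟩ := idx j hj
    have hmemk := Pk.mem (j / m) hilt.le
    have hwk := lipschitz_of_memM hH hmemk
    have hFk := Pk.flow (j / m) hilt
    rw [Pl.grid j hj.le, Pk.grid (j / m) hilt.le]
    refine Wp_le_of_two_maps hp hprob0 hScomp hS0 (Pl.contG j hj.le) (Pk.contG (j / m) hilt.le)
      (Pl.contH j hj.le) (Pl.inv1 j hj.le) (add_nonneg (hcnn j) (by positivity)) ?_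
    intro z hz
    have h1 : ‖Pk.G (j / m) z - Pk.F (j / m) ((j : ℝ) * δ - ((j / m : ℕ) : ℝ) * Δ)
        (Pk.G (j / m) z)‖ ≤ M * Δ := by
      have hb : ∀ y, ‖v (μk (((j / m : ℕ) : ℝ) * Δ)) y‖ ≤ M := hBdd _ hmemk
      have := flow_speed hFk hb (Pk.G (j / m) z) ((j : ℝ) * δ - ((j / m : ℕ) : ℝ) * Δ) 0
      rw [hFk.1] at this
      refine this.trans ?_
      have habs : |0 - ((j : ℝ) * δ - ((j / m : ℕ) : ℝ) * Δ)| ≤ Δ := by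
        rw [abs_le]
        constructor <;> nlinarith
      nlinarith
    have h2 := hstart z hz
    calc ‖Pk.G (j / m) z - Pl.G j z‖
        ≤ ‖Pk.G (j / m) z - Pk.F (j / m) ((j : ℝ) * δ - ((j / m : ℕ) : ℝ) * Δ)
            (Pk.G (j / m) z)‖ +
          ‖Pk.F (j / m) ((j : ℝ) * δ - ((j / m : ℕ) : ℝ) * Δ) (Pk.G (j / m) z) - Pl.G j z‖ :=
          norm_sub_le_norm_sub_add_norm_sub _ _ _
      _ ≤ M * Δ + c j := add_le_add h1 h2
      _ = c j + M * Δ := by ring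
  -- Gronwall comparison on one fine interval
  have gron : ∀ j : ℕ, j < 2 ^ l →
      (∀ x ∈ S, ‖Pk.F (j / m) ((j : ℝ) * δ - ((j / m : ℕ) : ℝ) * Δ) (Pk.G (j / m) x)
        - Pl.G j x‖ ≤ c j) →
      ∀ t ∈ Icc ((j : ℝ) * δ) (((j : ℝ) + 1) * δ), ∀ x ∈ S,
        ‖Pk.F (j / m) (t - ((j / m : ℕ) : ℝ) * Δ) (Pk.G (j / m) x)
          - Pl.F j (t - (j : ℝ) * δ) (Pl.G j x)‖
          ≤ gronwallBound (c j) L (K * (c j + M * Δ)) (t - (j : ℝ) * δ) := by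
    intro j hj hstart t ht x hx
    obtain ⟨hilt, hiΔle, hjΔle⟩ := idx j hj
    have hmemk := Pk.mem (j / m) hilt.le
    have hmeml := Pl.mem j hj.le
    have hwk := lipschitz_of_memM hH hmemk
    have hFk := Pk.flow (j / m) hilt
    have hFl := Pl.flow j hj
    set f : ℝ → En n := fun s => Pk.F (j / m) (s - ((j / m : ℕ) : ℝ) * Δ) (Pk.G (j / m) x)
      with hfdef
    set g : ℝ → En n := fun s => Pl.F j (s - (j : ℝ) * δ) (Pl.G j x) with hgdef
    have hf' : ∀ s, HasDerivAt f (v (μk (((j / m : ℕ) : ℝ) * Δ)) (f s)) s := by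
      intro s
      have h1 : HasDerivAt (fun u : ℝ => u - ((j / m : ℕ) : ℝ) * Δ) 1 s :=
        (hasDerivAt_id s).sub_const _
      have := (hFk.2 (Pk.G (j / m) x) (s - ((j / m : ℕ) : ℝ) * Δ)).scomp s h1
      simpa [hfdef, Function.comp_def] using this
    have hg' : ∀ s, HasDerivAt g (v (μl ((j : ℝ) * δ)) (g s)) s := by
      intro s
      have h1 : HasDerivAt (fun u : ℝ => u - (j : ℝ) * δ) 1 s :=
        (hasDerivAt_id s).sub_const _
      have := (hFl.2 (Pl.G j x) (s - (j : ℝ) * δ)).scomp s h1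
      simpa [hgdef, Function.comp_def] using this
    have hwp : Wp n p (μl ((j : ℝ) * δ)) (μk (((j / m : ℕ) : ℝ) * Δ)) ≤ c j + M * Δ :=
      wpGrid j hj hstart
    have g_bound : ∀ s ∈ Ico ((j : ℝ) * δ) (((j : ℝ) + 1) * δ),
        dist (v (μl ((j : ℝ) * δ)) (g s)) (v (μk (((j / m : ℕ) : ℝ) * Δ)) (g s))
          ≤ K * (c j + M * Δ) := by
      intro s _
      rw [dist_eq_norm]
      refine (hWLip _ _ hmeml hmemk (g s)).trans ?_
      exact mul_le_mul_of_nonneg_left hwp hK.le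
    have ha : dist (f ((j : ℝ) * δ)) (g ((j : ℝ) * δ)) ≤ c j := by
      rw [dist_eq_norm]
      have hg0 : g ((j : ℝ) * δ) = Pl.G j x := by
        rw [hgdef]
        simp only [sub_self]
        exact hFl.1 _
      rw [hg0]
      exact hstart x hx
    have happrox := dist_le_of_approx_trajectories_ODE
      (v := fun _ : ℝ => v (μk (((j / m : ℕ) : ℝ) * Δ))) (K := L.toNNReal)
      (f := f) (f' := fun s => v (μk (((j / m : ℕ) : ℝ) * Δ)) (f s))
      (g := g) (g' := fun s => v (μl ((j : ℝ) * δ)) (g s))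
      (a := (j : ℝ) * δ) (b := ((j : ℝ) + 1) * δ) (εf := 0) (εg := K * (c j + M * Δ))
      (δ := c j)
      (fun _ => hwk)
      (fun s _ => (hf' s).continuousAt.continuousWithinAt)
      (fun s _ => (hf' s).hasDerivWithinAt)
      (fun s _ => by simp)
      (fun s _ => (hg' s).continuousAt.continuousWithinAt)
      (fun s _ => (hg' s).hasDerivWithinAt)
      g_bound ha t ht
    rw [dist_eq_norm, Real.coe_toNNReal _ hL.le, zero_add] at happrox
    exact happrox
  -- the start estimates, by induction on the fine grid
  have start : ∀ j : ℕ, j < 2 ^ l → ∀ x ∈ S,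
      ‖Pk.F (j / m) ((j : ℝ) * δ - ((j / m : ℕ) : ℝ) * Δ) (Pk.G (j / m) x) - Pl.G j x‖
        ≤ c j := by
    intro j
    induction j with
    | zero =>
      intro _ x hx
      have h0k : 0 < 2 ^ k := pow_pos (by norm_num) _
      have h0 : ((0 : ℕ) : ℝ) * δ - ((0 / m : ℕ) : ℝ) * Δ = 0 := by simp
      rw [h0, Nat.zero_div, Pk.hG0, Pl.hG0, (Pk.flow 0 h0k).1 x]
      simp [hc0]
    | succ j ih =>
      intro hj1 x hx
      have hj : j < 2 ^ l := Nat.lt_of_succ_lt hj1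
      have hDt := gron j hj (ih hj) (((j : ℝ) + 1) * δ) ⟨by nlinarith, le_rfl⟩ x hx
      have hoff : ((j : ℝ) + 1) * δ - (j : ℝ) * δ = δ := by ring
      rw [hoff, ← hcs j, ← Pl.hGs j x] at hDt
      rcases Nat.lt_or_ge (j + 1) ((j / m + 1) * m) with hcase | hcase
      · have hdiv : (j + 1) / m = j / m :=
          Nat.div_eq_of_lt_le (le_trans (Nat.div_mul_le_self j m) (Nat.le_succ j)) hcase
        rw [hdiv]
        push_cast
        exact hDt
      · have h3 : j < (j / m + 1) * m := by
          nlinarith [Nat.div_add_mod j m, Nat.mod_lt j hm]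
        have hj1m : j + 1 = (j / m + 1) * m := le_antisymm (Nat.succ_le_of_lt h3) hcase
        have hdiv : (j + 1) / m = j / m + 1 := by
          rw [hj1m, Nat.mul_div_cancel _ hm]
        obtain ⟨hilt1, -, -⟩ := idx (j + 1) hj1
        rw [hdiv] at hilt1
        have hFk1 := Pk.flow (j / m + 1) hilt1
        have htime : ((j : ℝ) + 1) * δ = (((j / m : ℕ) : ℝ) + 1) * Δ := by
          have hcast := congrArg (fun a : ℕ => (a : ℝ)) hj1m
          push_cast at hcast
          rw [hΔm]
          linear_combination δ * hcast
        have hoff2 : ((j : ℝ) + 1) * δ - ((j / m : ℕ) : ℝ) * Δ = Δ := by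
          rw [htime]; ring
        rw [hoff2, ← Pk.hGs (j / m) x] at hDt
        rw [hdiv]
        have hoff3 : ((j + 1 : ℕ) : ℝ) * δ - ((j / m + 1 : ℕ) : ℝ) * Δ = 0 := by
          push_cast
          push_cast at htime
          linear_combination htime
        rw [hoff3, hFk1.1 (Pk.G (j / m + 1) x)]
        exact hDt
  -- final assembly
  intro t ht
  obtain ⟨ht0, htT⟩ := ht
  have h2lpos : 0 < 2 ^ l := pow_pos (by norm_num) _
  set j : ℕ := min (⌊t / δ⌋₊) (2 ^ l - 1) with hjdef
  have hjlt : j < 2 ^ l := lt_of_le_of_lt (min_le_right _ _) (Nat.sub_lt h2lpos one_pos)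
  have hjfl : (j : ℝ) ≤ t / δ := by
    have h1 : j ≤ ⌊t / δ⌋₊ := min_le_left _ _
    have h2 : ((⌊t / δ⌋₊ : ℕ) : ℝ) ≤ t / δ := Nat.floor_le (by positivity)
    exact le_trans (Nat.cast_le.2 h1) h2
  have hid : t / δ * δ = t := div_mul_cancel₀ t hδ.ne'
  have hjt : (j : ℝ) * δ ≤ t := by
    nlinarith [mul_le_mul_of_nonneg_right hjfl hδ.le]
  have htj : t ≤ ((j : ℝ) + 1) * δ := by
    rcases le_or_gt (⌊t / δ⌋₊) (2 ^ l - 1) with hc | hc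
    · have hjeq : j = ⌊t / δ⌋₊ := min_eq_left hc
      have h1 : t / δ < ((⌊t / δ⌋₊ : ℕ) : ℝ) + 1 := Nat.lt_floor_add_one _
      rw [hjeq]
      nlinarith [mul_lt_mul_of_pos_right h1 hδ]
    · have hjeq : j = 2 ^ l - 1 := min_eq_right hc.le
      have hcast : ((j : ℝ) + 1) = ((2 ^ l : ℕ) : ℝ) := by
        rw [hjeq]
        have : (1 : ℕ) ≤ 2 ^ l := h2lpos
        push_cast [Nat.cast_sub this]
        ring
      rw [hcast, hNTl]
      exact htT
  obtain ⟨hilt, hiΔle, hjΔle⟩ := idx j hjlt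
  have hmemk := Pk.mem (j / m) hilt.le
  have hmeml := Pl.mem j hjlt.le
  have hwk := lipschitz_of_memM hH hmemk
  have hwl := lipschitz_of_memM hH hmeml
  have hFk := Pk.flow (j / m) hilt
  have hFl := Pl.flow j hjlt
  have heqk : μk t = Measure.map
      (fun x => Pk.F (j / m) (t - ((j / m : ℕ) : ℝ) * Δ) (Pk.G (j / m) x)) μ₀ :=
    Pk.eqn (j / m) hilt t (le_trans hiΔle hjt) (le_trans htj hjΔle)
  have heql : μl t = Measure.map (fun x => Pl.F j (t - (j : ℝ) * δ) (Pl.G j x)) μ₀ :=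
    Pl.eqn j hjlt t hjt htj
  have hCnn : 0 ≤ M * Δ * Real.exp ((L + K) * T) := by positivity
  have hbd : ∀ z ∈ S, ‖Pk.F (j / m) (t - ((j / m : ℕ) : ℝ) * Δ) (Pk.G (j / m) z)
      - Pl.F j (t - (j : ℝ) * δ) (Pl.G j z)‖ ≤ M * Δ * Real.exp ((L + K) * T) := by
    intro z hz
    have h1 := gron j hjlt (start j hjlt) t ⟨hjt, htj⟩ z hz
    have h2 : gronwallBound (c j) L (K * (c j + M * Δ)) (t - (j : ℝ) * δ) ≤ c (j + 1) := by
      rw [hcs]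
      refine gb_mono hL (hcnn j) ?_ (by nlinarith)
      nlinarith [hcnn j, mul_pos hM hΔ]
    have h3 := hcT (j + 1) hjlt
    linarith
  have hcontCoarse : Continuous (fun x => Pk.F (j / m) (t - ((j / m : ℕ) : ℝ) * Δ)
      (Pk.G (j / m) x)) := (flow_cont hwk hFk _).comp (Pk.contG (j / m) hilt.le)
  have hcontFine : Continuous (fun x => Pl.F j (t - (j : ℝ) * δ) (Pl.G j x)) :=
    (flow_cont hwl hFl _).comp (Pl.contG j hjlt.le)
  have hinvCoarse : Continuous (fun y => Pk.H (j / m)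
      (Pk.F (j / m) (-(t - ((j / m : ℕ) : ℝ) * Δ)) y)) :=
    (Pk.contH (j / m) hilt.le).comp (flow_cont hwk hFk _)
  have hinvFine : Continuous (fun y => Pl.H j (Pl.F j (-(t - (j : ℝ) * δ)) y)) :=
    (Pl.contH j hjlt.le).comp (flow_cont hwl hFl _)
  have hinvCoarse_eq : ∀ y, Pk.H (j / m) (Pk.F (j / m) (-(t - ((j / m : ℕ) : ℝ) * Δ))
      (Pk.F (j / m) (t - ((j / m : ℕ) : ℝ) * Δ) (Pk.G (j / m) y))) = y := by
    intro y
    rw [flow_inv hwk hFk _ (Pk.G (j / m) y), Pk.inv1 (j / m) hilt.le y]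
  have hinvFine_eq : ∀ y, Pl.H j (Pl.F j (-(t - (j : ℝ) * δ))
      (Pl.F j (t - (j : ℝ) * δ) (Pl.G j y))) = y := by
    intro y
    rw [flow_inv hwl hFl _ (Pl.G j y), Pl.inv1 j hjlt.le y]
  constructor
  · rw [heqk, heql]
    exact Wp_le_of_two_maps hp hprob0 hScomp hS0 hcontCoarse hcontFine hinvCoarse
      hinvCoarse_eq hCnn (fun z hz => by rw [norm_sub_rev]; exact hbd z hz)
  · rw [heqk, heql]
    exact Wp_le_of_two_maps hp hprob0 hScomp hS0 hcontFine hcontCoarse hinvFine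
      hinvFine_eq hCnn hbd
end Aux2

/-- The approximations `μᵏ` produced by Scheme 1 with `Δt = T/2ᵏ` form a Cauchy
sequence in `C([0,T], 𝓜)` for the distance `d(μ,ν) = sup_{t∈[0,T]} W_p(μₜ,νₜ)`. -/
theorem stmt9 (n : ℕ) (p T : ℝ) (hp : 1 ≤ p) (hT : 0 < T)
    (v : Measure (En n) → En n → En n) (L M K : ℝ) (hH : HypH n p v L M K)
    (μ₀ : Measure (En n)) (hμ₀ : MemM n μ₀)
    (μseq : ℕ → ℝ → Measure (En n))
    (hscheme : ∀ k : ℕ, Scheme1 n v μ₀ (T / 2 ^ k) T (μseq k)) :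
    ∀ ε > 0, ∃ N : ℕ, ∀ k ≥ N, ∀ l ≥ N, ∀ t ∈ Icc (0 : ℝ) T,
      Wp n p (μseq k t) (μseq l t) ≤ ε := by
  intro ε hε
  obtain ⟨hL, hM, hK, -, -, -, -⟩ := id hH
  have hRpos : 0 < M * T * Real.exp ((L + K) * T) := by positivity
  obtain ⟨N, hN⟩ := pow_unbounded_of_one_lt (M * T * Real.exp ((L + K) * T) / ε) one_lt_two
  refine ⟨N, ?_⟩
  have key : ∀ a b : ℕ, a ≤ b → N ≤ a → ∀ t ∈ Icc (0 : ℝ) T,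
      Wp n p (μseq a t) (μseq b t) ≤ ε ∧ Wp n p (μseq b t) (μseq a t) ≤ ε := by
    intro a b hab hNa t ht
    have h := key_compare hp hT hH hμ₀ hab (hscheme a) (hscheme b) t ht
    have hbound : M * (T / 2 ^ a) * Real.exp ((L + K) * T) ≤ ε := by
      have h2 : (2 : ℝ) ^ N ≤ 2 ^ a := pow_le_pow_right₀ one_le_two hNa
      have hpa : (0 : ℝ) < 2 ^ a := by positivity
      have hpN : (0 : ℝ) < 2 ^ N := by positivity
      have hRe : M * (T / 2 ^ a) * Real.exp ((L + K) * T)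
          = M * T * Real.exp ((L + K) * T) / 2 ^ a := by ring
      rw [hRe, div_le_iff₀ hpa]
      have h3 : M * T * Real.exp ((L + K) * T) < ε * 2 ^ N := by
        rw [div_lt_iff₀ hε] at hN
        linarith
      nlinarith
    exact ⟨(h.1).trans hbound, (h.2).trans hbound⟩
  intro k hk l hl t ht
  rcases le_total k l with h | h
  · exact (key k l h hk t ht).1
  · exact (key l k h hl t ht).2


end
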